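/- Let K be a finite simplicial complex whose dual K' is a graph (dim K' = 1). Then for all nonempty faces α, β of K': α ∩ β ≠ ∅ if and only if (⋂α) ∪ (⋂β) is a face of K. Consequently the configuration space Ĥ(K) equals the simplicial deleted product of the graph K'. -/
import Mathlib


open scoped BigOperators

noncomputable section

variable {V : Type*} [Fintype V] [DecidableEq V]

def IsComplex (K : Finset (Finset V)) : Prop :=
  ∅ ∈ K ∧ (∀ v : V, {v} ∈ K) ∧ ∀ F ∈ K, ∀ G ⊆ F, G ∈ K

def facets (K : Finset (Finset V)) : Finset (Finset V) :=
  K.filter fun J => ∀ J' ∈ K, J ⊆ J' → J = J'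

def contV (K : Finset (Finset V)) (i : V) : Finset (Finset V) :=
  (facets K).filter fun J => i ∈ J

def dual (K : Finset (Finset V)) : Finset (Finset (Finset V)) :=
  (facets K).powerset.filter fun α => (α.inf id).Nonempty

def geomFace {W : Type*} [Fintype W] (F : Finset W) : Set (W → ℝ) :=
  {x | (∀ w, 0 ≤ x w) ∧ (∑ w, x w) = 1 ∧ ∀ w, x w ≠ 0 → w ∈ F}

def geom {W : Type*} [Fintype W] (L : Finset (Finset W)) : Set (W → ℝ) :=
  ⋃ F ∈ L, geomFace F

def supp {W : Type*} [Fintype W] [DecidableEq W] (x : W → ℝ) : Finset W :=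
  Finset.univ.filter fun w => x w ≠ 0

def Faithful {d : ℕ} (K : Finset (Finset V))
    (f : (Finset V → ℝ) → EuclideanSpace ℝ (Fin d)) : Prop :=
  ∀ I : Finset V, (⋂ i ∈ I, f '' geomFace (contV K i)).Nonempty → I ∈ K

def affExt {W : Type*} [Fintype W] {E : Type*} [AddCommGroup E] [Module ℝ E]
    (p : W → E) (x : W → ℝ) : E := ∑ w, x w • p w

def Hhat (K : Finset (Finset V)) : Set ((Finset V → ℝ) × (Finset V → ℝ)) :=
  {z | z.1 ∈ geom (dual K) ∧ z.2 ∈ geom (dual K) ∧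
    ((supp z.1).inf id ∪ (supp z.2).inf id) ∉ K}

def Matousek (d : ℕ) (K : Finset (Finset V)) : Prop :=
  ∃ g : Hhat K → EuclideanSpace ℝ (Fin d),
    Continuous g ∧ (∀ z, ‖g z‖ = 1) ∧
    ∀ (x y : Finset V → ℝ) (hxy : (x, y) ∈ Hhat K) (hyx : (y, x) ∈ Hhat K),
      g ⟨(y, x), hyx⟩ = - g ⟨(x, y), hxy⟩

def Representable (d : ℕ) (K : Finset (Finset V)) : Prop :=
  ∃ C : V → Set (EuclideanSpace ℝ (Fin d)),
    (∀ i, Convex ℝ (C i)) ∧ ∀ I : Finset V, I ∈ K ↔ (⋂ i ∈ I, C i).Nonempty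

def dimOf {W : Type*} [Fintype W] [DecidableEq W] (L : Finset (Finset W)) : ℕ :=
  (L.sup Finset.card) - 1

/-- The simplicial deleted product of a complex. -/
def delProd {W : Type*} [Fintype W] [DecidableEq W] (G : Finset (Finset W)) :
    Set ((W → ℝ) × (W → ℝ)) :=
  {z | z.1 ∈ geom G ∧ z.2 ∈ geom G ∧ supp z.1 ∩ supp z.2 = ∅}

lemma facets_subset' (K : Finset (Finset V)) : facets K ⊆ K :=
  Finset.filter_subset _ _

lemma exists_facet' (K : Finset (Finset V)) (hK : IsComplex K) {G : Finset V}
    (hG : G ∈ K) : ∃ F ∈ facets K, G ⊆ F := by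
  classical
  have hne : (K.filter fun J => G ⊆ J).Nonempty := ⟨G, by simp [hG]⟩
  obtain ⟨F, hF, hmax⟩ := Finset.exists_max_image _ Finset.card hne
  simp only [Finset.mem_filter] at hF
  refine ⟨F, ?_, hF.2⟩
  simp only [facets, Finset.mem_filter]
  refine ⟨hF.1, fun J' hJ' hsub => ?_⟩
  have hmem : J' ∈ K.filter fun J => G ⊆ J := by
    simp [Finset.mem_filter, hJ', hF.2.trans hsub]
  exact Finset.eq_of_subset_of_card_le hsub (hmax J' hmem)

/-- if the dual of `K` is a graph, then for nonempty faces
`α, β` of `K'`, `α ∩ β ≠ ∅` iff `(⋂α) ∪ (⋂β) ∈ K`; consequently the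
configuration space `Ĥ(K)` equals the deleted product of `K'`. -/
theorem stmt16 (K : Finset (Finset V)) (hK : IsComplex K)
    (hdim : dimOf (dual K) = 1) :
    (∀ a ∈ dual K, ∀ b ∈ dual K, a.Nonempty → b.Nonempty →
      ((a ∩ b).Nonempty ↔ (a.inf id ∪ b.inf id) ∈ K)) ∧
    Hhat K = delProd (dual K) := by
  classical
  have hsup : (dual K).sup Finset.card = 2 := by
    unfold dimOf at hdim; omega
  have hcard : ∀ a ∈ dual K, a.card ≤ 2 := by
    intro a ha
    have h1 := Finset.le_sup (f := Finset.card) ha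
    omega
  have main : ∀ a ∈ dual K, ∀ b ∈ dual K, a.Nonempty → b.Nonempty →
      ((a ∩ b).Nonempty ↔ (a.inf id ∪ b.inf id) ∈ K) := by
    intro a ha b hb hane hbne
    have ha' := ha; have hb' := hb
    simp only [dual, Finset.mem_filter, Finset.mem_powerset] at ha' hb'
    constructor
    · rintro ⟨F, hF⟩
      rw [Finset.mem_inter] at hF
      have hFK : F ∈ K := facets_subset' K (ha'.1 hF.1)
      have h1 : a.inf id ⊆ F := Finset.le_iff_subset.mp (Finset.inf_le (f := id) hF.1)
      have h2 : b.inf id ⊆ F := Finset.le_iff_subset.mp (Finset.inf_le (f := id) hF.2)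
      exact hK.2.2 F hFK _ (Finset.union_subset h1 h2)
    · intro hu
      obtain ⟨F, hF, hsub⟩ := exists_facet' K hK hu
      have key : ∀ c : Finset (Finset V), c ∈ dual K → c.Nonempty →
          c.inf id ⊆ F → F ∈ c := by
        intro c hc hcne hcsub
        have hc' := hc
        simp only [dual, Finset.mem_filter, Finset.mem_powerset] at hc'
        by_contra hFc
        have hins : insert F c ∈ dual K := by
          simp only [dual, Finset.mem_filter, Finset.mem_powerset]
          refine ⟨Finset.insert_subset hF hc'.1, ?_⟩
          rw [Finset.inf_insert]
          have : (id F ⊓ c.inf id : Finset V) = c.inf id := by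
            simpa [id] using Finset.inter_eq_right.2 hcsub
          rw [this]
          exact hc'.2
        have hcardins := hcard _ hins
        rw [Finset.card_insert_of_notMem hFc] at hcardins
        have hc1 : c.card = 1 := by
          have := Finset.card_pos.mpr hcne
          omega
        obtain ⟨A, hA⟩ := Finset.card_eq_one.1 hc1
        subst hA
        have hAinf : (({A} : Finset (Finset V)).inf id) = A := by simp
        have hAF : A ⊆ F := by rw [← hAinf]; exact hcsub
        have hAfac : A ∈ facets K := hc'.1 (Finset.mem_singleton_self A)
        simp only [facets, Finset.mem_filter] at hAfac
        have hFK : F ∈ K := facets_subset' K hF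
        have : A = F := hAfac.2 F hFK hAF
        exact hFc (by rw [← this]; exact Finset.mem_singleton_self A)
      have hFa : F ∈ a := key a ha hane
        ((Finset.subset_union_left).trans hsub)
      have hFb : F ∈ b := key b hb hbne
        ((Finset.subset_union_right).trans hsub)
      exact ⟨F, Finset.mem_inter.2 ⟨hFa, hFb⟩⟩
  refine ⟨main, ?_⟩
  have suppmem : ∀ x : Finset V → ℝ, x ∈ geom (dual K) →
      supp x ∈ dual K ∧ (supp x).Nonempty := by
    intro x hx
    simp only [geom, Set.mem_iUnion] at hx
    obtain ⟨F, hF, hxF⟩ := hx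
    have hF' := hF
    simp only [dual, Finset.mem_filter, Finset.mem_powerset] at hF'
    have hsupp : supp x ⊆ F := fun w hw =>
      hxF.2.2 w (by simpa [supp] using hw)
    have hne : (supp x).Nonempty := by
      obtain ⟨w, _, hw⟩ := Finset.exists_ne_zero_of_sum_ne_zero
        (f := x) (by rw [hxF.2.1]; exact one_ne_zero)
      exact ⟨w, by simp [supp, hw]⟩
    refine ⟨?_, hne⟩
    simp only [dual, Finset.mem_filter, Finset.mem_powerset]
    refine ⟨hsupp.trans hF'.1, hF'.2.mono (Finset.inf_mono hsupp)⟩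
  ext z
  obtain ⟨x, y⟩ := z
  simp only [Hhat, delProd, Set.mem_setOf_eq]
  constructor
  · rintro ⟨hx, hy, h⟩
    refine ⟨hx, hy, ?_⟩
    obtain ⟨hxd, hxne⟩ := suppmem x hx
    obtain ⟨hyd, hyne⟩ := suppmem y hy
    rw [← Finset.not_nonempty_iff_eq_empty]
    exact fun hnon => h ((main _ hxd _ hyd hxne hyne).1 hnon)
  · rintro ⟨hx, hy, h⟩
    refine ⟨hx, hy, fun hmem => ?_⟩
    obtain ⟨hxd, hxne⟩ := suppmem x hx
    obtain ⟨hyd, hyne⟩ := suppmem y hy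
    have hnon := (main _ hxd _ hyd hxne hyne).2 hmem
    rw [h] at hnon
    exact Finset.not_nonempty_empty hnon
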